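/- arXiv:1603.06311 — 4 statements merged into one kernel-verified Lean document; each statement's English description precedes it below -/
import Mathlib

section
/- Let f : X → Y be a furling of relatively valued graphs, where X and Y are finite. Then for any fixed vertices y, y' of Y and any x' ∈ f⁻¹(y'), the Cartan matrix entries satisfy c_{yy'} = Σ_{x ∈ f⁻¹(y)} c_{xx'}, where c on the left is the Cartan matrix of Y and c on the right is the Cartan matrix of X. -/
open Finset

/-- The Cartan matrix of a (relatively) valued oriented graph with vertices `V`, edges `E`,
source and target maps `src, tgt` and edge values `η, ν`:  `c i i = 2` and, for `i ≠ j`,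
`c i j = −Σ_{e : i→j} η e − Σ_{e : j→i} ν e`. -/
noncomputable def valuedGraphCartan {V E : Type*} [Fintype E] [DecidableEq V]
    (src tgt : E → V) (η ν : E → ℚ) (i j : V) : ℚ :=
  if i = j then 2
  else - (∑ e ∈ univ.filter (fun e => src e = i ∧ tgt e = j), η e)
       - (∑ e ∈ univ.filter (fun e => src e = j ∧ tgt e = i), ν e)

/-- Let `f : X → Y` be a furling of (finite) relatively valued graphs.  Then
for any fixed vertices `y, y'` of `Y` and any `x' ∈ f⁻¹(y')`, the Cartan matrix entries satisfy
`c_{yy'} = Σ_{x ∈ f⁻¹(y)} c_{xx'}`, where `c` on the left is the Cartan matrix of `Y` and `c`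
on the right is the Cartan matrix of `X`.

A relatively valued graph is a finite oriented multigraph without loops together with rationals
`η e, ν e` on each edge, such that there are positive rationals `d i` on vertices with
`d (src e) * η e = d (tgt e) * ν e`.  A graph homomorphism `(fV, fE)` (commuting with sources
and targets) is a furling if for all `y y' : VY` and every `x` in the fiber over `y`:
`ν d = Σ_{x' ∈ f⁻¹(y')} Σ_{d' : x → x', fE d' = d} ν d'` for every edge `d : y → y'`, and
`η e = Σ_{x' ∈ f⁻¹(y')} Σ_{e' : x' → x, fE e' = e} η e'` for every edge `e : y' → y`. -/
theorem furling_cartan_sum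
    {VX EX VY EY : Type*} [Fintype VX] [Fintype EX] [Fintype VY] [Fintype EY]
    [DecidableEq VX] [DecidableEq VY] [DecidableEq EY]
    (srcX tgtX : EX → VX) (ηX νX : EX → ℚ)
    (srcY tgtY : EY → VY) (ηY νY : EY → ℚ)
    -- no loops
    (hXloops : ∀ e, srcX e ≠ tgtX e) (hYloops : ∀ e, srcY e ≠ tgtY e)
    -- relative valuations
    (dX : VX → ℚ) (hdX : ∀ v, 0 < dX v)
    (hvalX : ∀ e, dX (srcX e) * ηX e = dX (tgtX e) * νX e)
    (dY : VY → ℚ) (hdY : ∀ v, 0 < dY v)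
    (hvalY : ∀ e, dY (srcY e) * ηY e = dY (tgtY e) * νY e)
    -- graph homomorphism
    (fV : VX → VY) (fE : EX → EY)
    (hsrc : ∀ e, fV (srcX e) = srcY (fE e)) (htgt : ∀ e, fV (tgtX e) = tgtY (fE e))
    -- furling conditions
    (hfurlν : ∀ y y' : VY, ∀ x : VX, fV x = y → ∀ d : EY, srcY d = y → tgtY d = y' →
      νY d = ∑ x' ∈ univ.filter (fun x' => fV x' = y'),
        ∑ d' ∈ univ.filter (fun d' => srcX d' = x ∧ tgtX d' = x' ∧ fE d' = d), νX d')
    (hfurlη : ∀ y y' : VY, ∀ x : VX, fV x = y → ∀ e : EY, srcY e = y' → tgtY e = y →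
      ηY e = ∑ x' ∈ univ.filter (fun x' => fV x' = y'),
        ∑ e' ∈ univ.filter (fun e' => srcX e' = x' ∧ tgtX e' = x ∧ fE e' = e), ηX e')
    -- conclusion
    (y y' : VY) (x' : VX) (hx' : fV x' = y') :
    valuedGraphCartan srcY tgtY ηY νY y y'
      = ∑ x ∈ univ.filter (fun x => fV x = y), valuedGraphCartan srcX tgtX ηX νX x x' := by
  classical
  -- Key reindexing lemma: summing fiberwise over edges of Y recovers the full sum over
  -- edges of X between two fixed vertices.
  have key : ∀ (a b : VX) (y1 y2 : VY), fV a = y1 → fV b = y2 → ∀ g : EX → ℚ,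
      (∑ e ∈ univ.filter (fun e => srcY e = y1 ∧ tgtY e = y2),
        ∑ e' ∈ univ.filter (fun e' => srcX e' = a ∧ tgtX e' = b ∧ fE e' = e), g e')
      = ∑ e' ∈ univ.filter (fun e' => srcX e' = a ∧ tgtX e' = b), g e' := by
    intro a b y1 y2 ha hb g
    have h1 : ∀ e : EY, univ.filter (fun e' => srcX e' = a ∧ tgtX e' = b ∧ fE e' = e)
        = (univ.filter (fun e' => srcX e' = a ∧ tgtX e' = b)).filter (fun e' => fE e' = e) := by
      intro e; ext e'; simp [and_assoc]
    simp_rw [h1]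
    rw [Finset.sum_fiberwise_eq_sum_filter]
    apply Finset.sum_congr _ (fun _ _ => rfl)
    ext e'
    simp only [mem_filter, mem_univ, true_and, and_iff_left_iff_imp]
    rintro ⟨hs, ht⟩
    exact ⟨by rw [← hsrc, hs, ha], by rw [← htgt, ht, hb]⟩
  by_cases h : y = y'
  · subst h
    rw [valuedGraphCartan, if_pos rfl]
    have hx'mem : x' ∈ univ.filter (fun x => fV x = y) := by simp [hx']
    rw [Finset.sum_eq_single_of_mem x' hx'mem]
    · rw [valuedGraphCartan, if_pos rfl]
    · intro x hx hne
      have hxy : fV x = y := (mem_filter.mp hx).2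
      rw [valuedGraphCartan, if_neg hne]
      have e1 : univ.filter (fun e => srcX e = x ∧ tgtX e = x') = ∅ := by
        ext e
        simp only [mem_filter, mem_univ, true_and, Finset.notMem_empty, iff_false]
        rintro ⟨hs, ht⟩
        exact hYloops (fE e) (by rw [← hsrc, ← htgt, hs, ht, hxy, hx'])
      have e2 : univ.filter (fun e => srcX e = x' ∧ tgtX e = x) = ∅ := by
        ext e
        simp only [mem_filter, mem_univ, true_and, Finset.notMem_empty, iff_false]
        rintro ⟨hs, ht⟩
        exact hYloops (fE e) (by rw [← hsrc, ← htgt, hs, ht, hxy, hx'])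
      rw [e1, e2]
      simp
  · rw [valuedGraphCartan, if_neg h]
    have hη : (∑ e ∈ univ.filter (fun e => srcY e = y ∧ tgtY e = y'), ηY e)
        = ∑ x ∈ univ.filter (fun x => fV x = y),
            ∑ e' ∈ univ.filter (fun e' => srcX e' = x ∧ tgtX e' = x'), ηX e' := by
      have : ∀ e ∈ univ.filter (fun e => srcY e = y ∧ tgtY e = y'),
          ηY e = ∑ x ∈ univ.filter (fun x => fV x = y),
            ∑ e' ∈ univ.filter (fun e' => srcX e' = x ∧ tgtX e' = x' ∧ fE e' = e), ηX e' := by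
        intro e he
        obtain ⟨hs, ht⟩ := (mem_filter.mp he).2
        exact hfurlη y' y x' hx' e hs ht
      rw [Finset.sum_congr rfl this, Finset.sum_comm]
      exact Finset.sum_congr rfl fun x hx => key x x' y y' (mem_filter.mp hx).2 hx' ηX
    have hν : (∑ e ∈ univ.filter (fun e => srcY e = y' ∧ tgtY e = y), νY e)
        = ∑ x ∈ univ.filter (fun x => fV x = y),
            ∑ e' ∈ univ.filter (fun e' => srcX e' = x' ∧ tgtX e' = x), νX e' := by
      have : ∀ e ∈ univ.filter (fun e => srcY e = y' ∧ tgtY e = y),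
          νY e = ∑ x ∈ univ.filter (fun x => fV x = y),
            ∑ e' ∈ univ.filter (fun e' => srcX e' = x' ∧ tgtX e' = x ∧ fE e' = e), νX e' := by
        intro e he
        obtain ⟨hs, ht⟩ := (mem_filter.mp he).2
        exact hfurlν y' y x' hx' e hs ht
      rw [Finset.sum_congr rfl this, Finset.sum_comm]
      exact Finset.sum_congr rfl fun x hx => key x' x y' y hx' (mem_filter.mp hx).2 νX
    have hterm : ∀ x ∈ univ.filter (fun x => fV x = y),
        valuedGraphCartan srcX tgtX ηX νX x x'
          = (- (∑ e' ∈ univ.filter (fun e' => srcX e' = x ∧ tgtX e' = x'), ηX e'))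
            - (∑ e' ∈ univ.filter (fun e' => srcX e' = x' ∧ tgtX e' = x), νX e') := by
      intro x hx
      have hne : x ≠ x' := fun heq => h (by rw [← (mem_filter.mp hx).2, heq, hx'])
      rw [valuedGraphCartan, if_neg hne]
    rw [Finset.sum_congr rfl hterm, Finset.sum_sub_distrib, Finset.sum_neg_distrib, hη, hν]
end

section
/- Let k be a field of characteristic zero, let A and B be symmetrizable generalized Cartan matrices indexed by finite sets Y and X respectively, and let f : X → Y be a surjection such that for all y, y' ∈ Y and every x' ∈ f⁻¹(y'), A y y' = Σ_{x ∈ f⁻¹(y)} B x x'. Then there is a homomorphism of Lie algebras Matrix.ToLieAlgebra A k → Matrix.ToLieAlgebra B k sending, for each y ∈ Y, the generator E_y to Σ_{x ∈ f⁻¹(y)} E_x, the generator F_y to Σ_{x ∈ f⁻¹(y)} F_x, and the generator H_y to Σ_{x ∈ f⁻¹(y)} H_x. -/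
open Finset

/-- `A` is a generalized Cartan matrix: `A s s = 2`, off-diagonal entries are nonpositive,
and `A s t = 0 ↔ A t s = 0`. -/
def IsGCM {S : Type*} (A : Matrix S S ℤ) : Prop :=
  (∀ s, A s s = 2) ∧ (∀ s t, s ≠ t → A s t ≤ 0) ∧ (∀ s t, A s t = 0 ↔ A t s = 0)

/-- `A` is symmetrizable: there are positive rationals `d s` with `d s · A s t = d t · A t s`. -/
def IsSymmetrizable {S : Type*} (A : Matrix S S ℤ) : Prop :=
  ∃ d : S → ℚ, (∀ s, 0 < d s) ∧ ∀ s t, d s * A s t = d t * A t s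

variable (R : Type*) [CommRing R]

/-- The generator `H b` of `Matrix.ToLieAlgebra R A`. -/
noncomputable def genH {B : Type*} [DecidableEq B] (A : Matrix B B ℤ) (b : B) :
    Matrix.ToLieAlgebra R A :=
  LieSubmodule.Quotient.mk (N := CartanMatrix.Relations.toIdeal R A)
    (FreeLieAlgebra.of R (CartanMatrix.Generators.H b))

/-- The generator `E b` of `Matrix.ToLieAlgebra R A`. -/
noncomputable def genE {B : Type*} [DecidableEq B] (A : Matrix B B ℤ) (b : B) :
    Matrix.ToLieAlgebra R A :=
  LieSubmodule.Quotient.mk (N := CartanMatrix.Relations.toIdeal R A)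
    (FreeLieAlgebra.of R (CartanMatrix.Generators.E b))

/-- The generator `F b` of `Matrix.ToLieAlgebra R A`. -/
noncomputable def genF {B : Type*} [DecidableEq B] (A : Matrix B B ℤ) (b : B) :
    Matrix.ToLieAlgebra R A :=
  LieSubmodule.Quotient.mk (N := CartanMatrix.Relations.toIdeal R A)
    (FreeLieAlgebra.of R (CartanMatrix.Generators.F b))

section FurlAux

lemma furl_sum_pow_apply_eq_zero {R M : Type*} [CommRing R] [AddCommGroup M] [Module R M]
    {ι : Type*} [DecidableEq ι] (s : Finset ι) (D : ι → Module.End R M) (m : ι → ℕ) (v : M)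
    (hcomm : ∀ x ∈ s, ∀ y ∈ s, Commute (D x) (D y))
    (hzero : ∀ x ∈ s, (D x ^ (m x + 1)) v = 0) :
    ((∑ x ∈ s, D x) ^ (1 + ∑ x ∈ s, m x)) v = 0 := by
  induction s using Finset.induction_on with
  | empty => simp
  | @insert a t ha ih =>
    have hC : Commute (D a) (∑ x ∈ t, D x) :=
      Commute.sum_right _ _ _ fun x hx =>
        hcomm a (mem_insert_self a t) x (mem_insert_of_mem hx)
    have hIH : ((∑ x ∈ t, D x) ^ (1 + ∑ x ∈ t, m x)) v = 0 :=
      ih (fun x hx y hy => hcomm _ (mem_insert_of_mem hx) _ (mem_insert_of_mem hy))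
        (fun x hx => hzero x (mem_insert_of_mem hx))
    rw [Finset.sum_insert ha, Finset.sum_insert ha, hC.add_pow, LinearMap.sum_apply]
    apply Finset.sum_eq_zero
    intro j _
    simp only [Module.End.mul_apply, Module.End.natCast_apply, map_nsmul]
    set N := 1 + (m a + ∑ x ∈ t, m x) with hN
    rcases le_or_gt (m a + 1) j with h | h
    · have hcp : Commute (D a ^ j) ((∑ x ∈ t, D x) ^ (N - j)) := hC.pow_pow _ _
      rw [← Module.End.mul_apply, hcp.eq, Module.End.mul_apply]
      have hDa : (D a ^ j) v = 0 := by
        have : D a ^ j = D a ^ (j - (m a + 1)) * D a ^ (m a + 1) := by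
          rw [← pow_add]; congr 1; omega
        rw [this, Module.End.mul_apply, hzero a (mem_insert_self a t), map_zero]
      rw [hDa, map_zero, smul_zero]
    · have hE : ((∑ x ∈ t, D x) ^ (N - j)) v = 0 := by
        have : (∑ x ∈ t, D x) ^ (N - j)
            = (∑ x ∈ t, D x) ^ ((N - j) - (1 + ∑ x ∈ t, m x)) *
              (∑ x ∈ t, D x) ^ (1 + ∑ x ∈ t, m x) := by
          rw [← pow_add]; congr 1; omega
        rw [this, Module.End.mul_apply, hIH, map_zero]
      rw [hE, map_zero, smul_zero]

/-- The quotient projection onto a Lie algebra quotient by an ideal, as a Lie algebra hom. -/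
noncomputable def furlMkHom {R L : Type*} [CommRing R] [LieRing L] [LieAlgebra R L]
    (I : LieIdeal R L) : L →ₗ⁅R⁆ L ⧸ I :=
  { (I : Submodule R L).mkQ with map_lie' := rfl }

@[simp] lemma furlMkHom_apply {R L : Type*} [CommRing R] [LieRing L] [LieAlgebra R L]
    (I : LieIdeal R L) (x : L) :
    furlMkHom I x = LieSubmodule.Quotient.mk (N := I) x := rfl

lemma furl_map_ad_pow {R L L' : Type*} [CommRing R] [LieRing L] [LieAlgebra R L]
    [LieRing L'] [LieAlgebra R L'] (g : L →ₗ⁅R⁆ L') (a b : L) (n : ℕ) :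
    g ((LieAlgebra.ad R L a ^ n) b) = (LieAlgebra.ad R L' (g a) ^ n) (g b) := by
  induction n with
  | zero => simp
  | succ n ih =>
    rw [pow_succ', pow_succ', Module.End.mul_apply, Module.End.mul_apply,
      LieAlgebra.ad_apply, LieAlgebra.ad_apply, LieHom.map_lie, ih]

lemma furl_sum_lie {L : Type*} [LieRing L] {ι : Type*} (s : Finset ι) (g : ι → L) (y : L) :
    ⁅∑ i ∈ s, g i, y⁆ = ∑ i ∈ s, ⁅g i, y⁆ := by
  induction s using Finset.cons_induction with
  | empty => simp
  | cons a t ha ih => simp [Finset.sum_cons, add_lie, ih]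

lemma furl_lie_sum {L : Type*} [LieRing L] {ι : Type*} (s : Finset ι) (g : ι → L) (y : L) :
    ⁅y, ∑ i ∈ s, g i⁆ = ∑ i ∈ s, ⁅y, g i⁆ := by
  induction s using Finset.cons_induction with
  | empty => simp
  | cons a t ha ih => simp [Finset.sum_cons, lie_add, ih]

lemma furl_map_zsmul {R L L' : Type*} [CommRing R] [LieRing L] [LieAlgebra R L]
    [LieRing L'] [LieAlgebra R L'] (g : L →ₗ⁅R⁆ L') (n : ℤ) (x : L) :
    g (n • x) = n • g x :=
  map_zsmul (g : L →ₗ[R] L') n x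

lemma furl_map_sum {R L L' ι : Type*} [CommRing R] [LieRing L] [LieAlgebra R L]
    [LieRing L'] [LieAlgebra R L'] (g : L →ₗ⁅R⁆ L') (s : Finset ι) (v : ι → L) :
    g (∑ i ∈ s, v i) = ∑ i ∈ s, g (v i) :=
  map_sum (g : L →ₗ[R] L') v s

/-- Lift of a Lie algebra hom to a quotient by an ideal contained in its kernel. -/
noncomputable def furlLift {R L L' : Type*} [CommRing R] [LieRing L] [LieAlgebra R L]
    [LieRing L'] [LieAlgebra R L'] (I : LieIdeal R L) (g : L →ₗ⁅R⁆ L') (h : I ≤ g.ker) :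
    (L ⧸ I) →ₗ⁅R⁆ L' :=
  { Submodule.liftQ (I : Submodule R L) (g : L →ₗ[R] L')
      (fun x hx => LinearMap.mem_ker.mpr (LieHom.mem_ker.mp (h hx))) with
    map_lie' := by
      intro u v
      obtain ⟨x, rfl⟩ := LieSubmodule.Quotient.surjective_mk' I u
      obtain ⟨z, rfl⟩ := LieSubmodule.Quotient.surjective_mk' I v
      show Submodule.liftQ _ _ _ ⁅LieSubmodule.Quotient.mk (N := I) x,
          LieSubmodule.Quotient.mk (N := I) z⁆ = _
      rw [← LieSubmodule.Quotient.mk_bracket]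
      show g ⁅x, z⁆ = _
      rw [LieHom.map_lie]
      rfl }

@[simp] lemma furlLift_mk {R L L' : Type*} [CommRing R] [LieRing L] [LieAlgebra R L]
    [LieRing L'] [LieAlgebra R L'] (I : LieIdeal R L) (g : L →ₗ⁅R⁆ L') (h : I ≤ g.ker)
    (x : L) : furlLift I g h (LieSubmodule.Quotient.mk (N := I) x) = g x := rfl

end FurlAux

/-- Let `k` be a field of characteristic zero, let `A` and `B` be
symmetrizable generalized Cartan matrices indexed by finite sets `Y` and `X` respectively,
and let `f : X → Y` be a surjection such that for all `y, y' ∈ Y` and every `x' ∈ f⁻¹(y')`,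
`A y y' = Σ_{x ∈ f⁻¹(y)} B x x'`.  Then there is a homomorphism of Lie algebras
`Matrix.ToLieAlgebra A k → Matrix.ToLieAlgebra B k` sending, for each `y ∈ Y`, the generator
`E_y` to `Σ_{x ∈ f⁻¹(y)} E_x`, the generator `F_y` to `Σ_{x ∈ f⁻¹(y)} F_x`, and the generator
`H_y` to `Σ_{x ∈ f⁻¹(y)} H_x`. -/
theorem furling_lie_algebra_hom (k : Type*) [Field k] [CharZero k]
    {Y X : Type*} [Fintype Y] [Fintype X] [DecidableEq Y] [DecidableEq X]
    (A : Matrix Y Y ℤ) (B : Matrix X X ℤ)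
    (hA : IsGCM A) (hB : IsGCM B) (hAsym : IsSymmetrizable A) (hBsym : IsSymmetrizable B)
    (f : X → Y) (hf : Function.Surjective f)
    (hcompat : ∀ y y' : Y, ∀ x' : X, f x' = y' →
      A y y' = ∑ x ∈ univ.filter (fun x => f x = y), B x x') :
    ∃ φ : Matrix.ToLieAlgebra k A →ₗ⁅k⁆ Matrix.ToLieAlgebra k B,
      ∀ y : Y,
        φ (genE k A y) = ∑ x ∈ univ.filter (fun x => f x = y), genE k B x ∧
        φ (genF k A y) = ∑ x ∈ univ.filter (fun x => f x = y), genF k B x ∧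
        φ (genH k A y) = ∑ x ∈ univ.filter (fun x => f x = y), genH k B x := by
  classical
  set P : Y → Finset X := fun y => univ.filter (fun x => f x = y) with hPdef
  have hPmem : ∀ {y : Y} {x : X}, x ∈ P y ↔ f x = y := by intro y x; simp [hPdef]
  -- the projection onto the B-side Lie algebra
  set πB := furlMkHom (CartanMatrix.Relations.toIdeal k B) with hπB
  have hgE : ∀ x : X, πB (FreeLieAlgebra.of k (CartanMatrix.Generators.E x)) = genE k B x :=
    fun _ => rfl
  have hgF : ∀ x : X, πB (FreeLieAlgebra.of k (CartanMatrix.Generators.F x)) = genF k B x :=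
    fun _ => rfl
  have hgH : ∀ x : X, πB (FreeLieAlgebra.of k (CartanMatrix.Generators.H x)) = genH k B x :=
    fun _ => rfl
  have hrelB : ∀ r ∈ CartanMatrix.Relations.toSet k B, πB r = 0 := by
    intro r hr
    rw [hπB, furlMkHom_apply]
    exact (LieSubmodule.Quotient.mk_eq_zero' (N := CartanMatrix.Relations.toIdeal k B)).2
      (LieSubmodule.subset_lieSpan hr)
  -- memberships of the six relation families
  have memHH : ∀ p : X × X, CartanMatrix.Relations.HH k p ∈ CartanMatrix.Relations.toSet k B :=
    fun p => Or.inl (Or.inl (Or.inl (Or.inl (Or.inl ⟨p, rfl⟩))))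
  have memEF : ∀ p : X × X, CartanMatrix.Relations.EF k p ∈ CartanMatrix.Relations.toSet k B :=
    fun p => Or.inl (Or.inl (Or.inl (Or.inl (Or.inr ⟨p, rfl⟩))))
  have memHE : ∀ p : X × X, CartanMatrix.Relations.HE k B p ∈ CartanMatrix.Relations.toSet k B :=
    fun p => Or.inl (Or.inl (Or.inl (Or.inr ⟨p, rfl⟩)))
  have memHF : ∀ p : X × X, CartanMatrix.Relations.HF k B p ∈ CartanMatrix.Relations.toSet k B :=
    fun p => Or.inl (Or.inl (Or.inr ⟨p, rfl⟩))
  have memadE : ∀ p : X × X, CartanMatrix.Relations.adE k B p ∈ CartanMatrix.Relations.toSet k B :=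
    fun p => Or.inl (Or.inr ⟨p, rfl⟩)
  have memadF : ∀ p : X × X, CartanMatrix.Relations.adF k B p ∈ CartanMatrix.Relations.toSet k B :=
    fun p => Or.inr ⟨p, rfl⟩
  -- the relations, in the quotient Lie algebra
  have hHH : ∀ x x' : X, ⁅genH k B x, genH k B x'⁆ = 0 := by
    intro x x'
    have h0 := hrelB _ (memHH (x, x'))
    rw [CartanMatrix.Relations.HH] at h0
    simp only [Function.uncurry_apply_pair, Function.comp_apply, LieHom.map_lie, hgH] at h0
    exact h0
  have hEF : ∀ x x' : X, ⁅genE k B x, genF k B x'⁆ = if x = x' then genH k B x else 0 := by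
    intro x x'
    have h0 := hrelB _ (memEF (x, x'))
    rw [CartanMatrix.Relations.EF] at h0
    simp only [Function.uncurry_apply_pair, Function.comp_apply] at h0
    by_cases hxx : x = x'
    · subst hxx
      rw [if_pos rfl] at h0
      rw [map_sub, LieHom.map_lie, hgE, hgF, hgH] at h0
      rw [if_pos rfl]
      exact sub_eq_zero.mp h0
    · rw [if_neg hxx] at h0
      rw [LieHom.map_lie, hgE, hgF] at h0
      rw [if_neg hxx]
      exact h0
  have hHE : ∀ x x' : X, ⁅genH k B x, genE k B x'⁆ = B x x' • genE k B x' := by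
    intro x x'
    have h0 := hrelB _ (memHE (x, x'))
    rw [CartanMatrix.Relations.HE] at h0
    simp only [Function.uncurry_apply_pair, Function.comp_apply] at h0
    rw [map_sub, LieHom.map_lie, furl_map_zsmul, hgH, hgE, sub_eq_zero] at h0
    exact h0
  have hHF : ∀ x x' : X, ⁅genH k B x, genF k B x'⁆ = -(B x x') • genF k B x' := by
    intro x x'
    have h0 := hrelB _ (memHF (x, x'))
    rw [CartanMatrix.Relations.HF] at h0
    simp only [Function.uncurry_apply_pair, Function.comp_apply] at h0
    rw [map_add, LieHom.map_lie, furl_map_zsmul, hgH, hgF, add_eq_zero_iff_eq_neg] at h0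
    rw [neg_smul]; exact h0
  have hadE : ∀ x x' : X,
      ((LieAlgebra.ad k (Matrix.ToLieAlgebra k B) (genE k B x)) ^ ((-B x x').toNat + 1))
        (genE k B x') = 0 := by
    intro x x'
    have h0 := hrelB _ (memadE (x, x'))
    rw [CartanMatrix.Relations.adE] at h0
    simp only [Function.uncurry_apply_pair, Function.comp_apply] at h0
    rw [furl_map_ad_pow, LieHom.map_lie, hgE, hgE] at h0
    rw [pow_succ, Module.End.mul_apply, LieAlgebra.ad_apply]
    exact h0
  have hadF : ∀ x x' : X,
      ((LieAlgebra.ad k (Matrix.ToLieAlgebra k B) (genF k B x)) ^ ((-B x x').toNat + 1))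
        (genF k B x') = 0 := by
    intro x x'
    have h0 := hrelB _ (memadF (x, x'))
    rw [CartanMatrix.Relations.adF] at h0
    simp only [Function.uncurry_apply_pair, Function.comp_apply] at h0
    rw [furl_map_ad_pow, LieHom.map_lie, hgF, hgF] at h0
    rw [pow_succ, Module.End.mul_apply, LieAlgebra.ad_apply]
    exact h0
  have hcommE : ∀ x x' : X, B x x' = 0 → ⁅genE k B x, genE k B x'⁆ = 0 := by
    intro x x' h
    have := hadE x x'
    rw [h] at this
    simpa using this
  have hcommF : ∀ x x' : X, B x x' = 0 → ⁅genF k B x, genF k B x'⁆ = 0 := by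
    intro x x' h
    have := hadF x x'
    rw [h] at this
    simpa using this
  -- fiber facts
  have hcompat' : ∀ y y' : Y, ∀ x' : X, f x' = y' → A y y' = ∑ x ∈ P y, B x x' := hcompat
  have hdisj : ∀ {y y' : Y} {x x' : X}, x ∈ P y → x' ∈ P y' → y ≠ y' → x ≠ x' := by
    intro y y' x x' hx hx' hne heq
    exact hne (by rw [← hPmem.mp hx, heq, hPmem.mp hx'])
  have hB0 : ∀ y : Y, ∀ x ∈ P y, ∀ x' ∈ P y, x ≠ x' → B x x' = 0 := by
    intro y x hx x' hx' hne
    have h2 := hcompat' y y x' (hPmem.mp hx')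
    rw [hA.1 y] at h2
    have hsplit : B x' x' + ∑ z ∈ (P y).erase x', B z x' = ∑ z ∈ P y, B z x' :=
      Finset.add_sum_erase (P y) (fun z => B z x') hx'
    rw [hB.1 x'] at hsplit
    have hz : ∑ z ∈ (P y).erase x', B z x' = 0 := by omega
    exact (Finset.sum_eq_zero_iff_of_nonpos
      (fun z hz' => hB.2.1 z x' (Finset.ne_of_mem_erase hz'))).1 hz x
      (Finset.mem_erase.mpr ⟨hne, hx⟩)
  -- the lift from the free Lie algebra on the Y generators
  set tgt : CartanMatrix.Generators Y → Matrix.ToLieAlgebra k B := fun g =>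
    match g with
    | .H y => ∑ x ∈ P y, genH k B x
    | .E y => ∑ x ∈ P y, genE k B x
    | .F y => ∑ x ∈ P y, genF k B x
  set φ₀ := FreeLieAlgebra.lift k tgt with hφ₀
  have hφ₀H : ∀ y : Y, φ₀ (FreeLieAlgebra.of k (CartanMatrix.Generators.H y))
      = ∑ x ∈ P y, genH k B x := fun y => FreeLieAlgebra.lift_of_apply _ _
  have hφ₀E : ∀ y : Y, φ₀ (FreeLieAlgebra.of k (CartanMatrix.Generators.E y))
      = ∑ x ∈ P y, genE k B x := fun y => FreeLieAlgebra.lift_of_apply _ _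
  have hφ₀F : ∀ y : Y, φ₀ (FreeLieAlgebra.of k (CartanMatrix.Generators.F y))
      = ∑ x ∈ P y, genF k B x := fun y => FreeLieAlgebra.lift_of_apply _ _
  -- φ₀ kills each relation family
  have kHH : ∀ p : Y × Y, φ₀ (CartanMatrix.Relations.HH k p) = 0 := by
    rintro ⟨y, y'⟩
    rw [CartanMatrix.Relations.HH]
    simp only [Function.uncurry_apply_pair, Function.comp_apply, LieHom.map_lie, hφ₀H]
    rw [furl_sum_lie]
    refine Finset.sum_eq_zero fun x hx => ?_
    rw [furl_lie_sum]
    exact Finset.sum_eq_zero fun x' hx' => hHH x x'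
  have kEF : ∀ p : Y × Y, φ₀ (CartanMatrix.Relations.EF k p) = 0 := by
    rintro ⟨y, y'⟩
    rw [CartanMatrix.Relations.EF]
    simp only [Function.uncurry_apply_pair, Function.comp_apply]
    by_cases hyy : y = y'
    · subst hyy
      rw [if_pos rfl, map_sub, LieHom.map_lie, hφ₀E, hφ₀F, hφ₀H, sub_eq_zero]
      rw [furl_sum_lie]
      rw [Finset.sum_congr rfl fun x hx => by
        rw [furl_lie_sum, Finset.sum_congr rfl fun x' _ => hEF x x',
          Finset.sum_ite_eq, if_pos hx]]
    · rw [if_neg hyy, LieHom.map_lie, hφ₀E, hφ₀F]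
      rw [furl_sum_lie]
      refine Finset.sum_eq_zero fun x hx => ?_
      rw [furl_lie_sum]
      refine Finset.sum_eq_zero fun x' hx' => ?_
      rw [hEF x x', if_neg (hdisj hx hx' hyy)]
  have kHE : ∀ p : Y × Y, φ₀ (CartanMatrix.Relations.HE k A p) = 0 := by
    rintro ⟨y, y'⟩
    rw [CartanMatrix.Relations.HE]
    simp only [Function.uncurry_apply_pair, Function.comp_apply]
    rw [map_sub, LieHom.map_lie, furl_map_zsmul, hφ₀H, hφ₀E, sub_eq_zero]
    rw [furl_sum_lie]
    rw [Finset.sum_congr rfl fun x _ =>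
      furl_lie_sum (P y') (fun x' => genE k B x') (genH k B x)]
    rw [Finset.sum_comm, Finset.smul_sum]
    refine Finset.sum_congr rfl fun x' hx' => ?_
    rw [Finset.sum_congr rfl fun x _ => hHE x x', ← Finset.sum_smul,
      ← hcompat' y y' x' (hPmem.mp hx')]
  have kHF : ∀ p : Y × Y, φ₀ (CartanMatrix.Relations.HF k A p) = 0 := by
    rintro ⟨y, y'⟩
    rw [CartanMatrix.Relations.HF]
    simp only [Function.uncurry_apply_pair, Function.comp_apply]
    rw [map_add, LieHom.map_lie, furl_map_zsmul, hφ₀H, hφ₀F]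
    have step : ⁅∑ x ∈ P y, genH k B x, ∑ x' ∈ P y', genF k B x'⁆
        = -(A y y' • ∑ x' ∈ P y', genF k B x') := by
      rw [furl_sum_lie]
      rw [Finset.sum_congr rfl fun x _ =>
        furl_lie_sum (P y') (fun x' => genF k B x') (genH k B x)]
      rw [Finset.sum_comm]
      rw [Finset.sum_congr rfl fun x' hx' => show
          (∑ x ∈ P y, ⁅genH k B x, genF k B x'⁆) = -(A y y') • genF k B x' by
        rw [Finset.sum_congr rfl fun x _ => hHF x x', ← Finset.sum_smul,
          Finset.sum_neg_distrib, ← hcompat' y y' x' (hPmem.mp hx')]]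
      rw [← Finset.smul_sum, neg_smul]
    rw [step, neg_add_cancel]
  have kadE : ∀ p : Y × Y, φ₀ (CartanMatrix.Relations.adE k A p) = 0 := by
    rintro ⟨y, y'⟩
    by_cases hyy : y = y'
    · subst hyy
      have h2 : (-A y y).toNat = 0 := by rw [hA.1]; rfl
      have : CartanMatrix.Relations.adE k A (y, y) = 0 := by
        rw [CartanMatrix.Relations.adE]
        simp [h2]
      rw [this, map_zero]
    · rw [CartanMatrix.Relations.adE]
      simp only [Function.uncurry_apply_pair, Function.comp_apply]
      rw [furl_map_ad_pow, LieHom.map_lie, hφ₀E, hφ₀E]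
      rw [furl_lie_sum, map_sum]
      refine Finset.sum_eq_zero fun x' hx' => ?_
      rw [← LieAlgebra.ad_apply (R := k), ← Module.End.mul_apply, ← pow_succ]
      have hnt : (-A y y').toNat + 1 = 1 + ∑ x ∈ P y, (-B x x').toNat := by
        have hcast : ((∑ x ∈ P y, (-B x x').toNat : ℕ) : ℤ) = -A y y' := by
          rw [hcompat y y' x' (hPmem.mp hx'), ← Finset.sum_neg_distrib]
          push_cast
          refine Finset.sum_congr rfl fun x hx => Int.toNat_of_nonneg ?_
          have := hB.2.1 x x' (hdisj hx hx' hyy)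
          omega
        omega
      rw [hnt, map_sum (LieAlgebra.ad k (Matrix.ToLieAlgebra k B))]
      refine furl_sum_pow_apply_eq_zero (P y) _ (fun x => (-B x x').toNat) _
        (fun a ha b hb => ?_) (fun a ha => hadE a x')
      rcases eq_or_ne a b with rfl | hab
      · exact Commute.refl _
      · have h0 : ⁅genE k B a, genE k B b⁆ = 0 := hcommE a b (hB0 y a ha b hb hab)
        have hl : ⁅LieAlgebra.ad k (Matrix.ToLieAlgebra k B) (genE k B a),
            LieAlgebra.ad k (Matrix.ToLieAlgebra k B) (genE k B b)⁆ = 0 := by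
          rw [Ring.lie_def, sub_eq_zero]
          ext z
          simp only [Module.End.mul_apply, LieAlgebra.ad_apply]
          rw [leibniz_lie, h0, zero_lie, zero_add]
        rw [Ring.lie_def, sub_eq_zero] at hl
        exact hl
  have kadF : ∀ p : Y × Y, φ₀ (CartanMatrix.Relations.adF k A p) = 0 := by
    rintro ⟨y, y'⟩
    by_cases hyy : y = y'
    · subst hyy
      have h2 : (-A y y).toNat = 0 := by rw [hA.1]; rfl
      have : CartanMatrix.Relations.adF k A (y, y) = 0 := by
        rw [CartanMatrix.Relations.adF]
        simp [h2]
      rw [this, map_zero]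
    · rw [CartanMatrix.Relations.adF]
      simp only [Function.uncurry_apply_pair, Function.comp_apply]
      rw [furl_map_ad_pow, LieHom.map_lie, hφ₀F, hφ₀F]
      rw [furl_lie_sum, map_sum]
      refine Finset.sum_eq_zero fun x' hx' => ?_
      rw [← LieAlgebra.ad_apply (R := k), ← Module.End.mul_apply, ← pow_succ]
      have hnt : (-A y y').toNat + 1 = 1 + ∑ x ∈ P y, (-B x x').toNat := by
        have hcast : ((∑ x ∈ P y, (-B x x').toNat : ℕ) : ℤ) = -A y y' := by
          rw [hcompat y y' x' (hPmem.mp hx'), ← Finset.sum_neg_distrib]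
          push_cast
          refine Finset.sum_congr rfl fun x hx => Int.toNat_of_nonneg ?_
          have := hB.2.1 x x' (hdisj hx hx' hyy)
          omega
        omega
      rw [hnt, map_sum (LieAlgebra.ad k (Matrix.ToLieAlgebra k B))]
      refine furl_sum_pow_apply_eq_zero (P y) _ (fun x => (-B x x').toNat) _
        (fun a ha b hb => ?_) (fun a ha => hadF a x')
      rcases eq_or_ne a b with rfl | hab
      · exact Commute.refl _
      · have h0 : ⁅genF k B a, genF k B b⁆ = 0 := hcommF a b (hB0 y a ha b hb hab)
        have hl : ⁅LieAlgebra.ad k (Matrix.ToLieAlgebra k B) (genF k B a),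
            LieAlgebra.ad k (Matrix.ToLieAlgebra k B) (genF k B b)⁆ = 0 := by
          rw [Ring.lie_def, sub_eq_zero]
          ext z
          simp only [Module.End.mul_apply, LieAlgebra.ad_apply]
          rw [leibniz_lie, h0, zero_lie, zero_add]
        rw [Ring.lie_def, sub_eq_zero] at hl
        exact hl
  -- the ideal is contained in the kernel
  have hle : CartanMatrix.Relations.toIdeal k A ≤ φ₀.ker := by
    rw [CartanMatrix.Relations.toIdeal, LieSubmodule.lieSpan_le]
    intro r hr
    rcases hr with (((((⟨p, rfl⟩ | ⟨p, rfl⟩) | ⟨p, rfl⟩) | ⟨p, rfl⟩) | ⟨p, rfl⟩) | ⟨p, rfl⟩)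
    · exact LieHom.mem_ker.mpr (kHH p)
    · exact LieHom.mem_ker.mpr (kEF p)
    · exact LieHom.mem_ker.mpr (kHE p)
    · exact LieHom.mem_ker.mpr (kHF p)
    · exact LieHom.mem_ker.mpr (kadE p)
    · exact LieHom.mem_ker.mpr (kadF p)
  -- descend to the quotient
  refine ⟨furlLift (CartanMatrix.Relations.toIdeal k A) φ₀ hle, fun y => ⟨?_, ?_, ?_⟩⟩
  · exact hφ₀E y
  · exact hφ₀F y
  · exact hφ₀H y
end

section
/- Let k be a field of characteristic zero, let A and B be symmetrizable generalized Cartan matrices indexed by finite sets Y and X respectively, and let f : X → Y be a surjection such that for all y, y' ∈ Y and every x' ∈ f⁻¹(y'), A y y' = Σ_{x ∈ f⁻¹(y)} B x x'. Then in the Lie algebra Matrix.ToLieAlgebra B k, for all y ≠ y' in Y the elements Ẽ_y = Σ_{x ∈ f⁻¹(y)} E_x and F̃_y = Σ_{x ∈ f⁻¹(y)} F_x satisfy the Serre relations ad(Ẽ_y)^{1 − A y y'}(Ẽ_{y'}) = 0 and ad(F̃_y)^{1 − A y y'}(F̃_{y'}) = 0. -/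
open Finset

variable (R : Type*) [CommRing R]

section KeyLemmas

/-- Pigeonhole/binomial lemma: a sum of pairwise commuting endomorphisms, each of which
kills `v` with exponent `n x`, kills `v` with total exponent `1 + ∑ (n x - 1)`. -/
lemma key_pow_sum_apply {k g : Type*} [CommRing k] [AddCommGroup g] [Module k g]
    {ι : Type*} [DecidableEq ι] (s : Finset ι) (D : ι → Module.End k g) (n : ι → ℕ) (v : g) :
    (∀ x ∈ s, ∀ z ∈ s, Commute (D x) (D z)) → (∀ x ∈ s, (D x ^ n x) v = 0) →
    ∀ N, 1 + ∑ x ∈ s, (n x - 1) ≤ N → ((∑ x ∈ s, D x) ^ N) v = 0 := by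
  classical
  induction s using Finset.induction_on with
  | empty =>
    intro _ _ N hN
    rw [Finset.sum_empty, zero_pow (by omega)]
    rfl
  | @insert a t ha IH =>
    intro hcomm hkill N hN
    have hab : Commute (D a) (∑ x ∈ t, D x) :=
      Commute.sum_right t _ _ fun z hz =>
        hcomm a (Finset.mem_insert_self a t) z (Finset.mem_insert_of_mem hz)
    rw [Finset.sum_insert ha, hab.add_pow, LinearMap.sum_apply]
    rw [Finset.sum_insert ha] at hN
    apply Finset.sum_eq_zero
    intro m hm
    rw [Finset.mem_range] at hm
    by_cases hcase : n a ≤ m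
    · have h1 : (D a ^ m) v = 0 := by
        have : D a ^ m = D a ^ (m - n a) * D a ^ n a := by
          rw [← pow_add, Nat.sub_add_cancel hcase]
        rw [this, Module.End.mul_apply, hkill a (Finset.mem_insert_self a t), map_zero]
      have h2 : Commute (D a ^ m)
          ((∑ x ∈ t, D x) ^ (N - m) * ((N.choose m : ℕ) : Module.End k g)) :=
        (hab.pow_pow m (N - m)).mul_right (Nat.cast_commute _ _).symm
      rw [mul_assoc, h2.eq]
      simp [Module.End.mul_apply, h1]
    · have hj : ((∑ x ∈ t, D x) ^ (N - m)) v = 0 :=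
        IH (fun x hx z hz => hcomm x (Finset.mem_insert_of_mem hx) z (Finset.mem_insert_of_mem hz))
          (fun x hx => hkill x (Finset.mem_insert_of_mem hx)) (N - m) (by omega)
      simp [Module.End.mul_apply, Module.End.natCast_apply, map_nsmul, hj]

/-- The abstract folded Serre relation. -/
lemma serre_aux {k L ι : Type*} [CommRing k] [LieRing L] [LieAlgebra k L] [DecidableEq ι]
    (s s' : Finset ι) (e : ι → L) (n : ι → ι → ℕ) (N : ℕ)
    (hcomm : ∀ x ∈ s, ∀ z ∈ s, ⁅e x, e z⁆ = 0)
    (hrel : ∀ x, ∀ x' ∈ s', ((LieAlgebra.ad k L (e x)) ^ (n x x')) (e x') = 0)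
    (hN : ∀ x' ∈ s', 1 + ∑ x ∈ s, (n x x' - 1) ≤ N) :
    ((LieAlgebra.ad k L (∑ x ∈ s, e x)) ^ N) (∑ x' ∈ s', e x') = 0 := by
  have hadsum : LieAlgebra.ad k L (∑ x ∈ s, e x) = ∑ x ∈ s, LieAlgebra.ad k L (e x) :=
    map_sum (LieAlgebra.ad k L : L →ₗ[k] Module.End k L) _ _
  rw [hadsum, map_sum]
  apply Finset.sum_eq_zero
  intro x' hx'
  refine key_pow_sum_apply s _ (fun x => n x x') (e x') ?_ (fun x _ => hrel x x' hx') N (hN x' hx')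
  intro x hx z hz
  have h2 : LieAlgebra.ad k L ⁅e x, e z⁆ = 0 := by
    rw [hcomm x hx z hz]; exact (LieAlgebra.ad k L).map_zero
  show _ * _ = _ * _
  refine LinearMap.ext fun w => ?_
  simp only [Module.End.mul_apply, LieAlgebra.ad_apply]
  rw [leibniz_lie, hcomm x hx z hz, zero_lie, zero_add]

lemma adE_mem_toIdeal {X : Type*} [DecidableEq X] (B : Matrix X X ℤ) (p : X × X) :
    CartanMatrix.Relations.adE R B p ∈ CartanMatrix.Relations.toIdeal R B :=
  LieSubmodule.subset_lieSpan (Or.inl (Or.inr (Set.mem_range_self _)))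

lemma adF_mem_toIdeal {X : Type*} [DecidableEq X] (B : Matrix X X ℤ) (p : X × X) :
    CartanMatrix.Relations.adF R B p ∈ CartanMatrix.Relations.toIdeal R B :=
  LieSubmodule.subset_lieSpan (Or.inr (Set.mem_range_self _))

lemma ad_pow_mk {L : Type*} [LieRing L] [LieAlgebra R L] (I : LieIdeal R L) (a b : L) (n : ℕ) :
    ((LieAlgebra.ad R (L ⧸ I) (LieSubmodule.Quotient.mk (N := I) a)) ^ n)
      (LieSubmodule.Quotient.mk (N := I) b)
      = LieSubmodule.Quotient.mk (N := I) (((LieAlgebra.ad R L a) ^ n) b) := by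
  induction n with
  | zero => simp
  | succ n ih =>
    rw [pow_succ', pow_succ', Module.End.mul_apply, Module.End.mul_apply, ih,
      LieAlgebra.ad_apply, LieAlgebra.ad_apply, ← LieSubmodule.Quotient.mk_bracket]

lemma genE_ad_pow {X : Type*} [DecidableEq X] (B : Matrix X X ℤ) (x z : X) :
    ((LieAlgebra.ad R (Matrix.ToLieAlgebra R B) (genE R B x)) ^ ((-B x z).toNat + 1))
      (genE R B z) = 0 := by
  rw [pow_succ, Module.End.mul_apply, LieAlgebra.ad_apply]
  unfold genE
  erw [← LieSubmodule.Quotient.mk_bracket]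
  erw [ad_pow_mk]
  erw [LieSubmodule.Quotient.mk_eq_zero']
  exact adE_mem_toIdeal R B (x, z)

lemma genE_lie_zero {X : Type*} [DecidableEq X] (B : Matrix X X ℤ) (x z : X)
    (h : B x z = 0) : ⁅genE R B x, genE R B z⁆ = 0 := by
  unfold genE
  erw [← LieSubmodule.Quotient.mk_bracket, LieSubmodule.Quotient.mk_eq_zero']
  have hmem := adE_mem_toIdeal R B (x, z)
  have heq : CartanMatrix.Relations.adE R B (x, z)
      = ⁅FreeLieAlgebra.of R (CartanMatrix.Generators.E x),
          FreeLieAlgebra.of R (CartanMatrix.Generators.E z)⁆ := by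
    simp [CartanMatrix.Relations.adE, Function.uncurry, h]
  rwa [heq] at hmem

lemma genF_ad_pow {X : Type*} [DecidableEq X] (B : Matrix X X ℤ) (x z : X) :
    ((LieAlgebra.ad R (Matrix.ToLieAlgebra R B) (genF R B x)) ^ ((-B x z).toNat + 1))
      (genF R B z) = 0 := by
  rw [pow_succ, Module.End.mul_apply, LieAlgebra.ad_apply]
  unfold genF
  erw [← LieSubmodule.Quotient.mk_bracket]
  erw [ad_pow_mk]
  erw [LieSubmodule.Quotient.mk_eq_zero']
  exact adF_mem_toIdeal R B (x, z)

lemma genF_lie_zero {X : Type*} [DecidableEq X] (B : Matrix X X ℤ) (x z : X)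
    (h : B x z = 0) : ⁅genF R B x, genF R B z⁆ = 0 := by
  unfold genF
  erw [← LieSubmodule.Quotient.mk_bracket, LieSubmodule.Quotient.mk_eq_zero']
  have hmem := adF_mem_toIdeal R B (x, z)
  have heq : CartanMatrix.Relations.adF R B (x, z)
      = ⁅FreeLieAlgebra.of R (CartanMatrix.Generators.F x),
          FreeLieAlgebra.of R (CartanMatrix.Generators.F z)⁆ := by
    simp [CartanMatrix.Relations.adF, Function.uncurry, h]
  rwa [heq] at hmem

end KeyLemmas

/-- Let `k` be a field of characteristic zero, let `A` and `B` be
symmetrizable generalized Cartan matrices indexed by finite sets `Y` and `X` respectively, and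
let `f : X → Y` be a surjection such that for all `y, y' ∈ Y` and every `x' ∈ f⁻¹(y')`,
`A y y' = Σ_{x ∈ f⁻¹(y)} B x x'`.  Then in the Lie algebra `Matrix.ToLieAlgebra B k`, for all
`y ≠ y'` in `Y` the elements `Ẽ_y = Σ_{x ∈ f⁻¹(y)} E_x` and `F̃_y = Σ_{x ∈ f⁻¹(y)} F_x`
satisfy the Serre relations `ad(Ẽ_y)^(1 − A y y')(Ẽ_{y'}) = 0` and
`ad(F̃_y)^(1 − A y y')(F̃_{y'}) = 0`. -/
theorem furling_serre_relations (k : Type*) [Field k] [CharZero k]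
    {Y X : Type*} [Fintype Y] [Fintype X] [DecidableEq Y] [DecidableEq X]
    (A : Matrix Y Y ℤ) (B : Matrix X X ℤ)
    (hA : IsGCM A) (hB : IsGCM B) (hAsym : IsSymmetrizable A) (hBsym : IsSymmetrizable B)
    (f : X → Y) (hf : Function.Surjective f)
    (hcompat : ∀ y y' : Y, ∀ x' : X, f x' = y' →
      A y y' = ∑ x ∈ univ.filter (fun x => f x = y), B x x') :
    ∀ y y' : Y, y ≠ y' →
      ((LieAlgebra.ad k (Matrix.ToLieAlgebra k B)
          (∑ x ∈ univ.filter (fun x => f x = y), genE k B x)) ^ (1 - A y y').toNat)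
        (∑ x' ∈ univ.filter (fun x' => f x' = y'), genE k B x') = 0 ∧
      ((LieAlgebra.ad k (Matrix.ToLieAlgebra k B)
          (∑ x ∈ univ.filter (fun x => f x = y), genF k B x)) ^ (1 - A y y').toNat)
        (∑ x' ∈ univ.filter (fun x' => f x' = y'), genF k B x') = 0 := by
  classical
  intro y y' hyy'
  set s := univ.filter (fun x => f x = y) with hs
  set s' := univ.filter (fun x' => f x' = y') with hs'
  have hmem_s : ∀ x, x ∈ s ↔ f x = y := by intro x; simp [hs]
  have hmem_s' : ∀ x, x ∈ s' ↔ f x = y' := by intro x; simp [hs']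
  -- within a fiber, off-diagonal entries of `B` vanish
  have hfiber : ∀ x z : X, f x = f z → x ≠ z → B x z = 0 := by
    intro x z hfz hne
    have hmemz : z ∈ univ.filter (fun x1 => f x1 = f z) := by simp
    have h2 := hcompat (f z) (f z) z rfl
    rw [hA.1, ← Finset.sum_erase_add _ _ hmemz, hB.1] at h2
    have hnonpos : ∀ x1 ∈ (univ.filter (fun x1 => f x1 = f z)).erase z, B x1 z ≤ 0 :=
      fun x1 hx1 => hB.2.1 x1 z (Finset.mem_erase.mp hx1).1
    have hzero : ∑ x1 ∈ (univ.filter (fun x1 => f x1 = f z)).erase z, B x1 z = 0 := by omega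
    have hx : x ∈ (univ.filter (fun x1 => f x1 = f z)).erase z :=
      Finset.mem_erase.mpr ⟨hne, by simp [hfz]⟩
    exact (Finset.sum_eq_zero_iff_of_nonpos hnonpos).mp hzero x hx
  have hBne : ∀ x ∈ s, ∀ x' ∈ s', B x x' ≤ 0 := by
    intro x hx x' hx'
    refine hB.2.1 x x' fun hxx' => hyy' ?_
    rw [← (hmem_s x).mp hx, hxx', (hmem_s' x').mp hx']
  have hNbound : ∀ x' ∈ s', 1 + ∑ x ∈ s, (((-B x x').toNat + 1) - 1) ≤ (1 - A y y').toNat := by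
    intro x' hx'
    simp only [Nat.add_sub_cancel]
    have hc := hcompat y y' x' ((hmem_s' x').mp hx')
    have hcast : ((∑ x ∈ s, (-B x x').toNat : ℕ) : ℤ) = - A y y' := by
      rw [Nat.cast_sum, hc, ← Finset.sum_neg_distrib]
      exact Finset.sum_congr rfl fun x hx =>
        Int.toNat_of_nonneg (by linarith [hBne x hx x' hx'])
    have hA' : A y y' ≤ 0 := hA.2.1 y y' hyy'
    omega
  have hsame : ∀ x ∈ s, ∀ z ∈ s, x ≠ z → B x z = 0 := by
    intro x hx z hz hne
    exact hfiber x z (by rw [(hmem_s x).mp hx, (hmem_s z).mp hz]) hne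
  constructor
  · refine serre_aux s s' (genE k B) (fun x x' => (-B x x').toNat + 1) _ ?_ ?_ hNbound
    · intro x hx z hz
      rcases eq_or_ne x z with rfl | hne
      · exact lie_self _
      · exact genE_lie_zero k B x z (hsame x hx z hz hne)
    · intro x x' _
      exact genE_ad_pow k B x x'
  · refine serre_aux s s' (genF k B) (fun x x' => (-B x x').toNat + 1) _ ?_ ?_ hNbound
    · intro x hx z hz
      rcases eq_or_ne x z with rfl | hne
      · exact lie_self _
      · exact genF_lie_zero k B x z (hsame x hx z hz hne)
    · intro x x' _
      exact genF_ad_pow k B x x'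
end

section
/- Let K be a field, let A be a finite-dimensional unital associative K-algebra, let x_1, …, x_m ∈ A be pairwise commuting elements, let u_1, …, u_m ∈ K, and set N = dim_K A. For each k let V_k = {a ∈ A : (x_k − u_k)^N·a = 0} and W_k = (x_k − u_k)^N·A. Then A = (⋂_{k=1}^m V_k) ⊕ (Σ_{k=1}^m W_k) as K-vector spaces, and there exists a unique idempotent e ∈ A such that e·A ⊆ ⋂_k V_k and (1 − e)·A ⊆ Σ_k W_k; moreover e·A = ⋂_k V_k and e commutes with each x_k. -/
open Module LinearMap

private lemma aux_range_pow_two_mul {K V : Type*} [Field K] [AddCommGroup V] [Module K V]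
    [FiniteDimensional K V] (f : Module.End K V) {n : ℕ} (hn : Module.finrank K V ≤ n) :
    LinearMap.range (f ^ (2 * n)) = LinearMap.range (f ^ n) := by
  have hker : LinearMap.ker (f ^ (2 * n)) = LinearMap.ker (f ^ n) := by
    rw [Module.End.ker_pow_eq_ker_pow_finrank_of_le (le_trans hn (by omega)),
      Module.End.ker_pow_eq_ker_pow_finrank_of_le hn]
  have hle : LinearMap.range (f ^ (2 * n)) ≤ LinearMap.range (f ^ n) := by
    rw [two_mul, pow_add, Module.End.mul_eq_comp]
    exact LinearMap.range_comp_le_range _ _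
  refine Submodule.eq_of_le_of_finrank_le hle ?_
  have h1 := LinearMap.finrank_range_add_finrank_ker (f ^ (2 * n))
  have h2 := LinearMap.finrank_range_add_finrank_ker (f ^ n)
  rw [hker] at h1
  omega

/-- Let `K` be a field, `A` a finite-dimensional unital associative
`K`-algebra, `x_1, …, x_m ∈ A` pairwise commuting, `u_1, …, u_m ∈ K`, and `N = dim_K A`.
For each `k` let `V_k = {a : (x_k − u_k)^N · a = 0}` and `W_k = (x_k − u_k)^N · A`.  Then
`A = (⋂_k V_k) ⊕ (Σ_k W_k)` as `K`-vector spaces, and there exists a unique idempotent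
`e ∈ A` such that `e·A ⊆ ⋂_k V_k` and `(1 − e)·A ⊆ Σ_k W_k`; moreover `e·A = ⋂_k V_k` and
`e` commutes with each `x_k`. -/
theorem fitting_idempotent_simultaneous (K : Type*) [Field K] (A : Type*) [Ring A]
    [Algebra K A] [FiniteDimensional K A] (m : ℕ) (x : Fin m → A) (u : Fin m → K)
    (hcomm : ∀ k l, Commute (x k) (x l))
    (N : ℕ) (hN : N = Module.finrank K A)
    (V W : Fin m → Submodule K A)
    (hV : ∀ k, V k = LinearMap.ker (LinearMap.mulLeft K ((x k - u k • (1 : A)) ^ N)))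
    (hW : ∀ k, W k = LinearMap.range (LinearMap.mulLeft K ((x k - u k • (1 : A)) ^ N))) :
    IsCompl (⨅ k, V k) (⨆ k, W k) ∧
    ∃ e : A,
      (IsIdempotentElem e ∧ (∀ a, e * a ∈ ⨅ k, V k) ∧ (∀ a, (1 - e) * a ∈ ⨆ k, W k)) ∧
      (∀ e' : A, IsIdempotentElem e' → (∀ a, e' * a ∈ ⨅ k, V k) →
        (∀ a, (1 - e') * a ∈ ⨆ k, W k) → e' = e) ∧
      Set.range (fun a => e * a) = ((⨅ k, V k : Submodule K A) : Set A) ∧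
      (∀ k, Commute e (x k)) := by
  classical
  set s : Set A := Set.range x with hs
  have hcomm' : ∀ a ∈ s, ∀ b ∈ s, a * b = b * a := by
    rintro _ ⟨k, rfl⟩ _ ⟨l, rfl⟩
    exact (hcomm k l).eq
  set B : Subalgebra K A := Algebra.adjoin K s with hB
  letI : CommRing ↥B := Algebra.adjoinCommRingOfComm K hcomm'
  haveI : FiniteDimensional K ↥B :=
    FiniteDimensional.finiteDimensional_submodule (Subalgebra.toSubmodule B)
  have hfinB : Module.finrank K ↥B ≤ N := by
    rw [hN]
    exact Submodule.finrank_le (Subalgebra.toSubmodule B)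
  -- elements of B
  set xB : Fin m → ↥B := fun k => ⟨x k, Algebra.subset_adjoin ⟨k, rfl⟩⟩ with hxB
  set yB : Fin m → ↥B := fun k => xB k - u k • 1 with hyB
  set z : Fin m → A := fun k => (x k - u k • (1 : A)) ^ N with hz
  have hyv : ∀ k, ((yB k : A)) = x k - u k • (1 : A) := by
    intro k; simp [hyB, hxB]
  have hzv : ∀ k, ((yB k ^ N : ↥B) : A) = z k := by
    intro k
    rw [hz]
    push_cast [hyv]
    ring
  -- membership criteria
  have hVmem : ∀ k (a : A), a ∈ V k ↔ z k * a = 0 := by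
    intro k a
    rw [hV k]
    simp [LinearMap.mem_ker, LinearMap.mulLeft_apply, hz]
  have hWmem : ∀ k (a : A), a ∈ W k ↔ ∃ b, z k * b = a := by
    intro k a
    rw [hW k]
    simp [LinearMap.mem_range, LinearMap.mulLeft_apply, hz]
  -- the stabilization element c
  have hrange : ∀ k, ∃ c : ↥B, yB k ^ (2 * N) * c = yB k ^ N := by
    intro k
    have h := aux_range_pow_two_mul (LinearMap.mulLeft K (yB k)) hfinB
    have hmem : yB k ^ N ∈ LinearMap.range (LinearMap.mulLeft K (yB k) ^ N) := by
      rw [LinearMap.pow_mulLeft]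
      exact ⟨1, mul_one _⟩
    rw [← h, LinearMap.pow_mulLeft] at hmem
    obtain ⟨c, hc⟩ := hmem
    exact ⟨c, hc⟩
  choose c hc using hrange
  set fB : Fin m → ↥B := fun k => yB k ^ N * c k with hfB
  set eB : ↥B := ∏ k, (1 - fB k) with heB
  set e : A := (eB : A) with he
  -- basic identities in B
  have hfB_idem : ∀ k, fB k * fB k = fB k := by
    intro k
    have h1 : fB k * fB k = (yB k ^ (2 * N) * c k) * c k := by rw [hfB]; ring
    rw [h1, hc k, hfB]
  have hzf : ∀ k, yB k ^ N * (1 - fB k) = 0 := by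
    intro k
    have h1 : yB k ^ N * (1 - fB k) = yB k ^ N - yB k ^ (2 * N) * c k := by rw [hfB]; ring
    rw [h1, hc k, sub_self]
  have hz_eB : ∀ k, yB k ^ N * eB = 0 := by
    intro k
    rw [heB, ← Finset.mul_prod_erase _ _ (Finset.mem_univ k), ← mul_assoc, hzf k, zero_mul]
  have heB_idem : eB * eB = eB := by
    rw [heB, ← Finset.prod_mul_distrib]
    exact Finset.prod_congr rfl fun k _ => by linear_combination hfB_idem k
  -- z k * e = 0 and e * z k = 0 in A
  have hze : ∀ k, z k * e = 0 := by
    intro k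
    have := congrArg (Subtype.val : ↥B → A) (hz_eB k)
    simpa [he, hzv k] using this
  have hez : ∀ k, e * z k = 0 := by
    intro k
    have hcm : eB * yB k ^ N = yB k ^ N * eB := mul_comm _ _
    have := congrArg (Subtype.val : ↥B → A) (hcm.trans (hz_eB k))
    simpa [he, hzv k] using this
  -- e * a ∈ ⨅ V
  have heV : ∀ a : A, e * a ∈ ⨅ k, V k := by
    intro a
    rw [Submodule.mem_iInf]
    intro k
    rw [hVmem, ← mul_assoc, hze k, zero_mul]
  -- sum representation of 1 - eB
  have hsum : ∀ t : Finset (Fin m), ∃ g : Fin m → ↥B,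
      1 - ∏ k ∈ t, (1 - fB k) = ∑ k ∈ t, g k * fB k := by
    intro t
    induction t using Finset.induction_on with
    | empty => exact ⟨0, by simp⟩
    | @insert a t ha ih =>
      obtain ⟨g, hg⟩ := ih
      refine ⟨Function.update g a (∏ k ∈ t, (1 - fB k)), ?_⟩
      rw [Finset.prod_insert ha, Finset.sum_insert ha, Function.update_self]
      have hrest : ∑ k ∈ t, Function.update g a (∏ k ∈ t, (1 - fB k)) k * fB k
          = ∑ k ∈ t, g k * fB k :=
        Finset.sum_congr rfl fun k hk => by
          rw [Function.update_of_ne (ne_of_mem_of_not_mem hk ha)]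
      rw [hrest, ← hg]; ring
  -- (1 - e) * a ∈ ⨆ W
  have heW : ∀ a : A, (1 - e) * a ∈ ⨆ k, W k := by
    intro a
    obtain ⟨g, hg⟩ := hsum Finset.univ
    have h1 : (1 : A) - e = ∑ k, ((g k * fB k : ↥B) : A) := by
      have := congrArg (Subtype.val : ↥B → A) hg
      simpa [he] using this
    rw [h1, Finset.sum_mul]
    refine Submodule.sum_mem _ fun k _ => Submodule.mem_iSup_of_mem k ?_
    have h2 : g k * fB k = yB k ^ N * (g k * c k) := by rw [hfB]; ring
    have h3 : ((g k * fB k : ↥B) : A) = z k * ((g k * c k : ↥B) : A) := by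
      rw [h2]
      push_cast [hzv k]
      ring
    rw [hWmem, h3, mul_assoc]
    exact ⟨_, rfl⟩
  -- e acts as identity on ⨅ V
  have haV : ∀ a : A, (∀ k, z k * a = 0) → e * a = a := by
    intro a ha
    have hfa : ∀ k, ((fB k : ↥B) : A) * a = 0 := by
      intro k
      have hcm : (fB k : ↥B) = c k * yB k ^ N := by rw [hfB]; ring
      rw [hcm]
      push_cast [hzv k]
      rw [mul_assoc, ha k, mul_zero]
    have key : ∀ t : Finset (Fin m), ((∏ k ∈ t, (1 - fB k) : ↥B) : A) * a = a := by
      intro t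
      induction t using Finset.induction_on with
      | empty => simp
      | @insert j t hj ih =>
        rw [Finset.prod_insert hj]
        push_cast
        rw [mul_assoc, ih, sub_mul, one_mul, hfa j, sub_zero]
    exact key Finset.univ
  -- e kills ⨆ W
  have haW : ∀ a : A, a ∈ (⨆ k, W k : Submodule K A) → e * a = 0 := by
    intro a ha
    refine Submodule.iSup_induction (motive := fun w => e * w = 0) _ ha ?_ (mul_zero e) ?_
    · intro k w hw
      obtain ⟨b, hb⟩ := (hWmem k w).mp hw
      rw [← hb, ← mul_assoc, hez k, zero_mul]
    · intro p q hp hq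
      rw [mul_add, hp, hq, add_zero]
  -- disjointness
  have hdisj : Disjoint (⨅ k, V k) (⨆ k, W k : Submodule K A) := by
    rw [Submodule.disjoint_def]
    intro a haP haQ
    have hza : ∀ k, z k * a = 0 := by
      intro k
      exact (hVmem k a).mp (Submodule.mem_iInf _ |>.mp haP k)
    rw [← haV a hza, haW a haQ]
  have hcompl : IsCompl (⨅ k, V k) (⨆ k, W k : Submodule K A) := by
    refine ⟨hdisj, codisjoint_iff.mpr ?_⟩
    rw [eq_top_iff]
    intro a _
    have := Submodule.add_mem_sup (heV a) (heW a)
    have h1 : e * a + (1 - e) * a = a := by noncomm_ring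
    rwa [h1] at this
  refine ⟨hcompl, e, ⟨?_, heV, heW⟩, ?_, ?_, ?_⟩
  · -- idempotent
    show e * e = e
    have := congrArg (Subtype.val : ↥B → A) heB_idem
    simpa [he] using this
  · -- uniqueness
    intro e' _ hV' hW'
    have hall : ∀ a : A, e' * a = e * a := by
      intro a
      have h1 : e' * a - e * a ∈ (⨅ k, V k : Submodule K A) :=
        Submodule.sub_mem _ (hV' a) (heV a)
      have h2 : e' * a - e * a ∈ (⨆ k, W k : Submodule K A) := by
        have h3 : e' * a - e * a = (1 - e) * a - (1 - e') * a := by noncomm_ring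
        rw [h3]
        exact Submodule.sub_mem _ (heW a) (hW' a)
      have := Submodule.disjoint_def.mp hdisj _ h1 h2
      exact sub_eq_zero.mp this
    have := hall 1
    simpa using this
  · -- range
    ext w
    constructor
    · rintro ⟨a, rfl⟩
      exact heV a
    · intro hw
      have hza : ∀ k, z k * w = 0 := fun k =>
        (hVmem k w).mp (Submodule.mem_iInf _ |>.mp hw k)
      exact ⟨w, haV w hza⟩
  · -- commutes
    intro k
    show e * x k = x k * e
    have hcm : eB * xB k = xB k * eB := mul_comm _ _
    have := congrArg (Subtype.val : ↥B → A) hcm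
    simpa [he, hxB] using this
end
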